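/- Let G_±(k,ω) = (1/2π²) ∫_{−y₀}^{y₀} e^{iωt} ∫₀^{π/2} e^{±k√(y₀²−t²) sin s} ds dt. Then G_+(k,ω) + G_−(k,ω) = sin(y₀√(ω²−k²))/(π√(ω²−k²)) for all real k, ω (with the analytic continuation sinh(y₀√(k²−ω²))/(π√(k²−ω²)) when |ω| < |k|). -/

import Mathlib

noncomputable def Gpm (y₀ : ℝ) (sgn : ℝ) (k ω : ℝ) : ℂ :=
  (1 / (2 * Real.pi ^ 2)) *
    ∫ t in (-y₀)..y₀, Complex.exp (Complex.I * ω * t) *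
      ∫ s in (0 : ℝ)..(Real.pi / 2),
        Complex.exp ((sgn * k * Real.sqrt (y₀ ^ 2 - t ^ 2) * Real.sin s : ℝ))

open MeasureTheory intervalIntegral Finset
open scoped Nat Real

lemma prod_wallis (n : ℕ) :
    ∏ i ∈ Finset.range n, (2 * (i : ℝ) + 1) / (2 * i + 2)
      = (2 * n)! / (4 ^ n * ((n)! : ℝ) ^ 2) := by
  induction n with
  | zero => simp
  | succ m ih =>
    rw [Finset.prod_range_succ, ih]
    have h1 : (2 * (m + 1)) = (2 * m + 1) + 1 := by ring
    rw [h1, Nat.factorial_succ, Nat.factorial_succ, Nat.factorial_succ]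
    have hm : ((m)! : ℝ) ≠ 0 := by positivity
    have h2 : ((2 * m)! : ℝ) ≠ 0 := by positivity
    push_cast
    field_simp
    ring
lemma wallis_half (n : ℕ) :
    (∫ s in (0:ℝ)..(Real.pi/2), Real.sin s ^ (2*n))
      = Real.pi * (2*n)! / (2 * 4 ^ n * ((n)! : ℝ) ^ 2) := by
  have hint : ∀ a b : ℝ, IntervalIntegrable (fun x => Real.sin x ^ (2*n)) volume a b :=
    fun a b => (Real.continuous_sin.pow _).intervalIntegrable a b
  have hsplit : (∫ x in (0:ℝ)..Real.pi, Real.sin x ^ (2*n))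
      = (∫ x in (0:ℝ)..(Real.pi/2), Real.sin x ^ (2*n))
        + ∫ x in (Real.pi/2)..Real.pi, Real.sin x ^ (2*n) :=
    (integral_add_adjacent_intervals (hint _ _) (hint _ _)).symm
  have hrefl : (∫ x in (Real.pi/2)..Real.pi, Real.sin x ^ (2*n))
      = ∫ x in (0:ℝ)..(Real.pi/2), Real.sin x ^ (2*n) := by
    have := intervalIntegral.integral_comp_sub_left (a := (0:ℝ)) (b := Real.pi/2)
      (fun x => Real.sin x ^ (2*n)) Real.pi
    rw [show Real.pi - Real.pi/2 = Real.pi/2 by ring, sub_zero] at this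
    rw [← this]
    congr 1
    ext x
    rw [Real.sin_pi_sub]
  have h := integral_sin_pow_even (n := n)
  rw [hsplit, hrefl, prod_wallis] at h
  have hm : ((n)! : ℝ) ≠ 0 := by positivity
  have h2 : (4:ℝ) ^ n ≠ 0 := by positivity
  field_simp at h ⊢
  linarith [h]
lemma integral_even_poly (y : ℝ) (p n : ℕ) :
    (∫ t in (-y)..y, t ^ (2*p) * (y^2 - t^2) ^ n)
      = 2 * y ^ (2*(p+n)+1) * 4 ^ n * (n)! * (p+n)! * (2*p)!
          / ((2*(p+n)+1)! * ((p)! : ℝ)) := by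
  induction n with
  | zero =>
    simp only [pow_zero, mul_one, Nat.add_zero, Nat.factorial_zero]
    rw [integral_pow]
    have h1 : (2*p+1 : ℕ) ≠ 0 := by omega
    have : (-y : ℝ) ^ (2*p+1) = -(y ^ (2*p+1)) := by
      rw [Odd.neg_pow ⟨p, by ring⟩]
    rw [this]
    have hfac : ((2*p+1)! : ℝ) = (2*p+1) * (2*p)! := by
      rw [Nat.factorial_succ]; push_cast; ring
    rw [hfac]
    have h2 : ((2*p)! : ℝ) ≠ 0 := by positivity
    have h3 : ((p)! : ℝ) ≠ 0 := by positivity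
    field_simp
    push_cast
    ring
  | succ n ih =>
    -- FTC step
    set In1 := ∫ t in (-y)..y, t ^ (2*p) * (y^2 - t^2) ^ (n+1) with hIn1
    have hcont : ∀ m l : ℕ, IntervalIntegrable (fun t : ℝ => t ^ m * (y^2 - t^2) ^ l)
        volume (-y) y := by
      intro m l
      exact (Continuous.mul (continuous_pow m)
        (((continuous_const.sub (continuous_pow 2)).pow l))).intervalIntegrable _ _
    have hderiv : ∀ t ∈ Set.uIcc (-y) y,
        HasDerivAt (fun t : ℝ => t ^ (2*p+1) * (y^2 - t^2) ^ (n+1))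
          ((2*p+1 : ℝ) * (t ^ (2*p) * (y^2 - t^2) ^ (n+1))
            - 2*(n+1) * (t ^ (2*p+2) * (y^2 - t^2) ^ n)) t := by
      intro t _
      have h1 : HasDerivAt (fun t : ℝ => t ^ (2*p+1)) ((2*p+1 : ℝ) * t ^ (2*p)) t := by
        simpa using hasDerivAt_pow (2*p+1) t
      have h2 : HasDerivAt (fun t : ℝ => y^2 - t^2) (-(2*t)) t := by
        simpa using (hasDerivAt_pow 2 t).const_sub (y^2)
      have h3 := h2.fun_pow (n+1)
      have := h1.fun_mul h3
      refine this.congr_deriv ?_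
      push_cast
      ring
    have hint2 : IntervalIntegrable (fun t : ℝ =>
        (2*p+1 : ℝ) * (t ^ (2*p) * (y^2 - t^2) ^ (n+1))
          - 2*(n+1) * (t ^ (2*p+2) * (y^2 - t^2) ^ n)) volume (-y) y := by
      apply Continuous.intervalIntegrable; fun_prop
    have hftc := intervalIntegral.integral_eq_sub_of_hasDerivAt hderiv hint2
    have hbdry : (fun t : ℝ => t ^ (2*p+1) * (y^2 - t^2) ^ (n+1)) y
        - (fun t : ℝ => t ^ (2*p+1) * (y^2 - t^2) ^ (n+1)) (-y) = 0 := by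
      simp [sub_self]
    rw [hbdry] at hftc
    have hsplit : (∫ t in (-y)..y,
          ((2*p+1 : ℝ) * (t ^ (2*p) * (y^2 - t^2) ^ (n+1))
            - 2*(n+1) * (t ^ (2*p+2) * (y^2 - t^2) ^ n)))
        = (2*p+1 : ℝ) * In1 - 2*(n+1) * ∫ t in (-y)..y, t ^ (2*p+2) * (y^2 - t^2) ^ n := by
      rw [intervalIntegral.integral_sub
          ((hcont (2*p) (n+1)).const_mul (2*p+1 : ℝ))
          ((hcont (2*p+2) n).const_mul _),
        intervalIntegral.integral_const_mul, intervalIntegral.integral_const_mul]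
    have hsubst : (∫ t in (-y)..y, t ^ (2*p+2) * (y^2 - t^2) ^ n)
        = y^2 * (∫ t in (-y)..y, t ^ (2*p) * (y^2 - t^2) ^ n) - In1 := by
      rw [hIn1, ← intervalIntegral.integral_const_mul,
        ← intervalIntegral.integral_sub ((hcont (2*p) n).const_mul _) (hcont (2*p) (n+1))]
      apply intervalIntegral.integral_congr
      intro t _
      simp only
      ring
    rw [hsplit, hsubst, ih] at hftc
    -- now solve for In1
    have key : (2*(p+n)+3 : ℝ) * In1
        = 2*(n+1) * y^2 * (2 * y ^ (2*(p+n)+1) * 4 ^ n * (n)! * (p+n)! * (2*p)!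
          / ((2*(p+n)+1)! * ((p)! : ℝ))) := by
      push_cast at hftc ⊢
      linarith [hftc]
    have hfac1 : ((2*(p+(n+1))+1)! : ℝ) = (2*(p+n)+3) * ((2*(p+n)+2) * (2*(p+n)+1)!) := by
      have e1 : 2*(p+(n+1))+1 = (2*(p+n)+2)+1 := by ring
      rw [e1, Nat.factorial_succ, Nat.factorial_succ]
      push_cast; ring
    have hfac2 : ((n+1)! : ℝ) = (n+1) * (n)! := by rw [Nat.factorial_succ]; push_cast; ring
    have hfac3 : ((p+(n+1))! : ℝ) = (p+n+1) * (p+n)! := by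
      have : p+(n+1) = (p+n)+1 := by ring
      rw [this, Nat.factorial_succ]; push_cast; ring
    have hy : y ^ (2*(p+(n+1))+1) = y^2 * y ^ (2*(p+n)+1) := by
      rw [← pow_add]; ring_nf
    rw [hfac1, hfac2, hfac3, hy]
    have hne1 : ((2*(p+n)+1)! : ℝ) ≠ 0 := by positivity
    have hne2 : ((p)! : ℝ) ≠ 0 := by positivity
    have hne3 : ((n)! : ℝ) ≠ 0 := by positivity
    have hne4 : ((p+n)! : ℝ) ≠ 0 := by positivity
    have hne5 : (2*(p+n)+3 : ℝ) ≠ 0 := by positivity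
    rw [eq_div_iff (by positivity)]
    have h' := key
    field_simp at h'
    linear_combination (2*(p:ℝ)+2*n+2) * h'
lemma integral_odd_zero (y : ℝ) (p n : ℕ) :
    (∫ t in (-y)..y, t ^ (2*p+1) * (y^2 - t^2) ^ n) = 0 := by
  have h := intervalIntegral.integral_comp_neg (a := (-y)) (b := y)
    (fun t : ℝ => t ^ (2*p+1) * (y^2 - t^2) ^ n)
  rw [neg_neg] at h
  have h2 : (∫ t in (-y)..y, (-t) ^ (2*p+1) * (y^2 - (-t)^2) ^ n)
      = ∫ t in (-y)..y, -(t ^ (2*p+1) * (y^2 - t^2) ^ n) := by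
    apply intervalIntegral.integral_congr
    intro t _
    simp only
    rw [Odd.neg_pow ⟨p, by ring⟩, neg_pow, neg_pow]
    ring_nf
  rw [h2, intervalIntegral.integral_neg] at h
  linarith

lemma tsum_nat_prod_eq {F : ℕ × ℕ → ℝ} (h : Summable F) :
    ∑' q : ℕ × ℕ, F q = ∑' N, ∑ kl ∈ Finset.HasAntidiagonal.antidiagonal N, F kl := by
  rw [← Finset.HasAntidiagonal.sigmaAntidiagonalEquivProd.tsum_eq F]
  rw [show (fun c => F (Finset.HasAntidiagonal.sigmaAntidiagonalEquivProd c)) = F ∘ Finset.HasAntidiagonal.sigmaAntidiagonalEquivProd from rfl]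
  rw [Summable.tsum_sigma' (fun N => (hasSum_fintype _).summable)
    (Finset.HasAntidiagonal.sigmaAntidiagonalEquivProd.summable_iff.mpr h)]
  congr 1
  ext N
  rw [← Finset.tsum_subtype]
  rfl

lemma choose_bound (n p : ℕ) :
    (((n+p).choose p : ℝ)) / ((2*(n+p)+1)!) ≤ 1 / ((n)! * (p)!) := by
  have h1 : ((n+p).choose p) * ((p)! * (n)!) = (n+p)! := by
    have := Nat.choose_mul_factorial_mul_factorial (Nat.le_add_left p n)
    simpa [Nat.add_sub_cancel, mul_assoc] using this
  have h2 : ((n+p)! : ℕ) ≤ (2*(n+p)+1)! := Nat.factorial_le (by omega)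
  rw [div_le_div_iff₀ (by positivity) (by positivity)]
  have := h1
  calc ((n+p).choose p : ℝ) * ((n)! * (p)!) = ((n+p)! : ℝ) := by
        push_cast [← h1]; ring
    _ ≤ ((2*(n+p)+1)! : ℝ) := by exact_mod_cast h2
    _ = 1 * ((2*(n+p)+1)!) := by ring

noncomputable def phi (x : ℝ) : ℝ := ∫ s in (0:ℝ)..(Real.pi/2), Real.exp (x * Real.sin s)

lemma phi_cont : Continuous phi := by
  apply intervalIntegral.continuous_parametric_intervalIntegral_of_continuous'
  fun_prop

lemma psi_hasSum (x : ℝ) :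
    HasSum (fun n : ℕ => Real.pi * x ^ (2*n) / (4^n * ((n)! : ℝ)^2))
      (phi x + phi (-x)) := by
  have hpi2 : (0:ℝ) ≤ Real.pi/2 := by positivity
  set μ := volume.restrict (Set.Ioc (0:ℝ) (Real.pi/2)) with hμ
  set F : ℕ → ℝ → ℝ := fun n s => 2 * ((x * Real.sin s) ^ (2*n) / ((2*n)! : ℝ)) with hF
  have hFcont : ∀ n, Continuous (F n) := by intro n; fun_prop
  have hFint : ∀ n, MeasureTheory.Integrable (F n) μ := fun n => (hFcont n).integrableOn_Ioc
  have hbound : ∀ n s, ‖F n s‖ ≤ 2 * ((x^2)^n / ((n)! : ℝ)) := by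
    intro n s
    have hnn : (0:ℝ) ≤ (x * Real.sin s) ^ (2*n) := Even.pow_nonneg (even_two_mul n) _
    rw [Real.norm_eq_abs, abs_of_nonneg (by simp only [hF]; positivity)]
    have h1 : (x * Real.sin s) ^ (2*n) ≤ (x^2)^n := by
      rw [pow_mul]
      apply pow_le_pow_left₀ (sq_nonneg _)
      calc (x * Real.sin s)^2 = x^2 * Real.sin s ^ 2 := by ring
        _ ≤ x^2 * 1 := by
            apply mul_le_mul_of_nonneg_left _ (sq_nonneg x)
            rw [← Real.sin_sq_add_cos_sq s]; nlinarith [sq_nonneg (Real.cos s)]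
        _ = x^2 := mul_one _
    have h2 : ((n)! : ℝ) ≤ ((2*n)! : ℝ) := by
      exact_mod_cast Nat.factorial_le (by omega)
    have h3 : (x * Real.sin s) ^ (2*n) / ((2*n)! : ℝ) ≤ (x^2)^n / ((n)! : ℝ) := by
      apply div_le_div₀ (by positivity) h1 (by positivity) h2
    simp only [hF]
    linarith
  have hμuniv : (μ Set.univ).toReal = Real.pi/2 := by
    rw [hμ, MeasureTheory.Measure.restrict_apply_univ, Real.volume_Ioc, sub_zero,
      ENNReal.toReal_ofReal (by positivity)]
  have hnorm_sum : Summable fun n => ∫ s, ‖F n s‖ ∂μ := by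
    apply Summable.of_nonneg_of_le
      (fun n => MeasureTheory.integral_nonneg fun s => norm_nonneg _)
      (fun n => ?_)
      (((Real.summable_pow_div_factorial (x^2)).mul_left 2).mul_right (Real.pi/2))
    calc (∫ s, ‖F n s‖ ∂μ) ≤ ∫ _, 2 * ((x^2)^n / ((n)! : ℝ)) ∂μ := by
          apply MeasureTheory.integral_mono (hFint n).norm _ (hbound n)
          exact (MeasureTheory.integrableOn_const_iff).2 (Or.inr (by
            rw [Real.volume_Ioc]; exact ENNReal.ofReal_lt_top))
      _ = 2 * ((x^2)^n / ((n)! : ℝ)) * (Real.pi/2) := by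
          rw [MeasureTheory.integral_const, measureReal_def, hμuniv, smul_eq_mul, mul_comm]
  have key := MeasureTheory.hasSum_integral_of_summable_integral_norm hFint hnorm_sum
  have htsum : ∀ s, (∑' n, F n s) = Real.exp (x * Real.sin s) + Real.exp (-x * Real.sin s) := by
    intro s
    have h := (Real.hasSum_cosh (x * Real.sin s)).mul_left 2
    have h2 : 2 * Real.cosh (x * Real.sin s)
        = Real.exp (x * Real.sin s) + Real.exp (-x * Real.sin s) := by
      rw [Real.cosh_eq]; rw [neg_mul]; ring
    rw [h2] at h
    exact h.tsum_eq
  have hval : (∫ s, (∑' n, F n s) ∂μ) = phi x + phi (-x) := by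
    simp only [htsum]
    rw [hμ, ← intervalIntegral.integral_of_le hpi2]
    rw [intervalIntegral.integral_add
      (by apply Continuous.intervalIntegrable; fun_prop)
      (by apply Continuous.intervalIntegrable; fun_prop)]
    simp only [phi, neg_mul]
  have hterm : ∀ n, (∫ s, F n s ∂μ) = Real.pi * x ^ (2*n) / (4^n * ((n)! : ℝ)^2) := by
    intro n
    have hcongr : ∀ s, F n s = (2 * x^(2*n) / ((2*n)! : ℝ)) * Real.sin s ^ (2*n) := by
      intro s; rw [hF]; simp only; rw [mul_pow]; ring
    simp only [hcongr]
    rw [MeasureTheory.integral_const_mul, hμ, ← intervalIntegral.integral_of_le hpi2,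
      wallis_half]
    have h2 : ((2*n)! : ℝ) ≠ 0 := by positivity
    have h3 : ((n)! : ℝ) ≠ 0 := by positivity
    field_simp
  rw [hval] at key
  exact (funext hterm : (fun n => ∫ s, F n s ∂μ) = _) ▸ key
lemma An_hasSum (y₀ k ω : ℝ) (hy₀ : 0 < y₀) (n : ℕ) :
    HasSum (fun p : ℕ => ((((-1:ℝ))^p * ω^(2*p) / ((2*p)! : ℝ)
        * (∫ t in (-y₀)..y₀, t^(2*p) * (y₀^2 - t^2)^n) : ℝ) : ℂ))
      (∫ t in (-y₀)..y₀, Complex.exp (Complex.I*ω*t) * (((y₀^2 - t^2 : ℝ) : ℂ))^n) := by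
  set μ := volume.restrict (Set.Ioc (-y₀) y₀) with hμ
  set H : ℕ → ℝ → ℂ := fun m t =>
    ((Complex.I*ω*t)^m / ((m)! : ℂ)) * (((y₀^2 - t^2 : ℝ) : ℂ))^n with hH
  have hy' : -y₀ ≤ y₀ := by linarith
  have hHint : ∀ m, Integrable (H m) μ := by
    intro m
    apply Continuous.integrableOn_Ioc
    fun_prop
  have hpt : ∀ t : ℝ, HasSum (fun m => H m t)
      (Complex.exp (Complex.I*ω*t) * (((y₀^2 - t^2 : ℝ) : ℂ))^n) := by
    intro t
    rw [Complex.exp_eq_exp_ℂ]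
    exact (NormedSpace.expSeries_div_hasSum_exp (Complex.I*ω*t)).mul_right _
  have hnorm : ∀ m, ∀ t ∈ Set.Ioc (-y₀) y₀,
      ‖H m t‖ ≤ (|ω| * y₀)^m / ((m)! : ℝ) * (y₀^2)^n := by
    intro m t ht
    have ht1 : |t| ≤ y₀ := abs_le.mpr ⟨ht.1.le, ht.2⟩
    have ht2 : |y₀^2 - t^2| ≤ y₀^2 := by
      rw [abs_le]
      constructor <;> nlinarith [sq_nonneg t, abs_nonneg t, sq_abs t]
    rw [hH]
    simp only [norm_mul, norm_div, norm_pow, Complex.norm_natCast, Complex.norm_real,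
      Real.norm_eq_abs]
    apply mul_le_mul _ (pow_le_pow_left₀ (abs_nonneg _) ht2 n) (by positivity) (by positivity)
    apply div_le_div₀ (by positivity) _ (by positivity) le_rfl
    have hb : ‖Complex.I‖ * |ω| * |t| ≤ |ω| * y₀ := by
      rw [Complex.norm_I, one_mul]
      exact mul_le_mul_of_nonneg_left ht1 (abs_nonneg ω)
    exact pow_le_pow_left₀ (by positivity) hb m
  have hμfin : μ Set.univ ≠ ⊤ := by
    rw [hμ, Measure.restrict_apply_univ, Real.volume_Ioc]
    exact ENNReal.ofReal_ne_top
  have hμuniv : (μ Set.univ).toReal = 2*y₀ := by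
    rw [hμ, Measure.restrict_apply_univ, Real.volume_Ioc,
      ENNReal.toReal_ofReal (by linarith)]
    ring
  have hnorm_sum : Summable fun m => ∫ t, ‖H m t‖ ∂μ := by
    apply Summable.of_nonneg_of_le
      (fun m => integral_nonneg fun t => norm_nonneg _) (fun m => ?_)
      (((Real.summable_pow_div_factorial (|ω| * y₀)).mul_right ((y₀^2)^n)).mul_right (2*y₀))
    calc (∫ t, ‖H m t‖ ∂μ) ≤ ∫ _, (|ω| * y₀)^m / ((m)! : ℝ) * (y₀^2)^n ∂μ := by
          apply integral_mono_of_nonneg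
            (Filter.Eventually.of_forall fun t => norm_nonneg _)
            ((integrableOn_const_iff).2 (Or.inr (by
              rw [Real.volume_Ioc]; exact ENNReal.ofReal_lt_top)))
          exact (ae_restrict_iff' measurableSet_Ioc).mpr
            (Filter.Eventually.of_forall (hnorm m))
      _ = (|ω| * y₀)^m / ((m)! : ℝ) * (y₀^2)^n * (2*y₀) := by
          rw [MeasureTheory.integral_const, measureReal_def, hμuniv, smul_eq_mul, mul_comm]
  have key := hasSum_integral_of_summable_integral_norm hHint hnorm_sum
  have hval : (∫ t, (∑' m, H m t) ∂μ)
      = ∫ t in (-y₀)..y₀, Complex.exp (Complex.I*ω*t) * (((y₀^2 - t^2 : ℝ) : ℂ))^n := by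
    rw [intervalIntegral.integral_of_le hy', ← hμ]
    congr 1
    ext t
    exact (hpt t).tsum_eq
  rw [hval] at key
  -- compute each integral
  have hterm : ∀ m, (∫ t, H m t ∂μ)
      = (Complex.I*ω)^m / ((m)! : ℂ)
        * ((∫ t in (-y₀)..y₀, t^m * (y₀^2 - t^2)^n : ℝ) : ℂ) := by
    intro m
    have hcongr : ∀ t : ℝ, H m t
        = ((Complex.I*ω)^m / ((m)! : ℂ)) * (((t^m * (y₀^2 - t^2)^n : ℝ)) : ℂ) := by
      intro t
      rw [hH]
      simp only
      push_cast
      ring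
    simp only [hcongr]
    rw [MeasureTheory.integral_const_mul, hμ, ← intervalIntegral.integral_of_le hy',
      intervalIntegral.integral_ofReal]
  have key2 : HasSum (fun m => (Complex.I*ω)^m / ((m)! : ℂ)
      * ((∫ t in (-y₀)..y₀, t^m * (y₀^2 - t^2)^n : ℝ) : ℂ))
      (∫ t in (-y₀)..y₀, Complex.exp (Complex.I*ω*t) * (((y₀^2 - t^2 : ℝ) : ℂ))^n) :=
    (funext hterm : (fun m => ∫ t, H m t ∂μ) = _) ▸ key
  -- evenization
  set h : ℕ → ℂ := fun m => (Complex.I*ω)^m / ((m)! : ℂ)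
      * ((∫ t in (-y₀)..y₀, t^m * (y₀^2 - t^2)^n : ℝ) : ℂ) with hh
  have hodd : HasSum (fun p => h (2*p+1)) 0 := by
    have : (fun p => h (2*p+1)) = fun p => 0 := by
      funext p
      rw [hh]
      simp only [integral_odd_zero y₀ p n]
      simp
    rw [this]
    exact hasSum_zero
  have heven : Summable (fun p => h (2*p)) :=
    key2.summable.comp_injective (fun a b hab => by omega)
  obtain ⟨S, hS⟩ := heven
  have huniq : S = (∫ t in (-y₀)..y₀, Complex.exp (Complex.I*ω*t)
      * (((y₀^2 - t^2 : ℝ) : ℂ))^n) := by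
    have := hS.even_add_odd hodd
    rw [add_zero] at this
    exact this.unique key2
  rw [huniq] at hS
  -- rewrite the even terms
  have hfinal : (fun p => h (2*p)) = fun p : ℕ => ((((-1:ℝ))^p * ω^(2*p) / ((2*p)! : ℝ)
      * (∫ t in (-y₀)..y₀, t^(2*p) * (y₀^2 - t^2)^n) : ℝ) : ℂ) := by
    funext p
    rw [hh]
    simp only
    rw [mul_pow, pow_mul, Complex.I_sq]
    push_cast
    ring
  rw [hfinal] at hS
  exact hS
lemma core_hasSum (y₀ k ω : ℝ) (hy₀ : 0 < y₀) :
    HasSum (fun n : ℕ => ((Real.pi * (k^2)^n / (4^n * ((n)!:ℝ)^2) : ℝ) : ℂ)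
        * ∫ t in (-y₀)..y₀, Complex.exp (Complex.I*ω*t) * (((y₀^2 - t^2 : ℝ) : ℂ))^n)
      (∫ t in (-y₀)..y₀, Complex.exp (Complex.I*ω*t)
        * ((phi (k * Real.sqrt (y₀^2 - t^2)) + phi (-(k * Real.sqrt (y₀^2 - t^2))) : ℝ) : ℂ)) := by
  have hy' : -y₀ ≤ y₀ := by linarith
  set μ := volume.restrict (Set.Ioc (-y₀) y₀) with hμ
  set cn : ℕ → ℝ := fun n => Real.pi * (k^2)^n / (4^n * ((n)!:ℝ)^2) with hcn
  set G : ℕ → ℝ → ℂ := fun n t =>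
    ((cn n : ℝ) : ℂ) * (Complex.exp (Complex.I*ω*t) * (((y₀^2 - t^2 : ℝ) : ℂ))^n) with hG
  have hexp1 : ∀ t : ℝ, ‖Complex.exp (Complex.I*ω*t)‖ = 1 := by
    intro t
    rw [show Complex.I*(ω:ℂ)*(t:ℂ) = ((ω*t:ℝ):ℂ) * Complex.I by push_cast; ring,
      Complex.norm_exp_ofReal_mul_I]
  have hGint : ∀ n, Integrable (G n) μ := by
    intro n
    apply Continuous.integrableOn_Ioc
    fun_prop
  have hpt : ∀ t ∈ Set.Ioc (-y₀) y₀, HasSum (fun n => G n t)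
      (Complex.exp (Complex.I*ω*t)
        * ((phi (k * Real.sqrt (y₀^2 - t^2)) + phi (-(k * Real.sqrt (y₀^2 - t^2))) : ℝ) : ℂ)) := by
    intro t ht
    have ht2 : (0:ℝ) ≤ y₀^2 - t^2 := by nlinarith [ht.1, ht.2]
    have hsq : (k * Real.sqrt (y₀^2 - t^2))^2 = k^2 * (y₀^2 - t^2) := by
      rw [mul_pow, Real.sq_sqrt ht2]
    have h1 := psi_hasSum (k * Real.sqrt (y₀^2 - t^2))
    have h2 : (fun n : ℕ => Real.pi * (k * Real.sqrt (y₀^2 - t^2)) ^ (2*n)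
        / (4^n * ((n)! : ℝ)^2)) = fun n => cn n * (y₀^2 - t^2)^n := by
      funext n
      rw [pow_mul, hsq, hcn]
      simp only [mul_pow]
      ring
    rw [h2] at h1
    have h3 := (Complex.hasSum_ofReal.mpr h1).mul_left
      (Complex.exp (Complex.I*ω*t))
    have h4 : (fun n : ℕ => Complex.exp (Complex.I*ω*t) * ((cn n * (y₀^2 - t^2)^n : ℝ) : ℂ))
        = fun n => G n t := by
      funext n
      rw [hG]
      push_cast
      ring
    rwa [h4] at h3
  have hnorm : ∀ n, ∀ t ∈ Set.Ioc (-y₀) y₀, ‖G n t‖ ≤ Real.pi * ((k^2*y₀^2/4)^n / ((n)!:ℝ)) := by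
    intro n t ht
    have ht2 : |y₀^2 - t^2| ≤ y₀^2 := by
      rw [abs_le]; constructor <;> nlinarith [ht.1, ht.2]
    have hcnn : (0:ℝ) ≤ cn n := by rw [hcn]; positivity
    have h5 : ‖G n t‖ = cn n * |y₀^2 - t^2|^n := by
      rw [hG]
      simp only [norm_mul, norm_pow, Complex.norm_real, Real.norm_eq_abs, hexp1 t]
      rw [abs_of_nonneg hcnn]
      ring
    rw [h5]
    calc cn n * |y₀^2 - t^2|^n ≤ cn n * (y₀^2)^n := by
          exact mul_le_mul_of_nonneg_left (pow_le_pow_left₀ (abs_nonneg _) ht2 n) hcnn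
      _ ≤ Real.pi * ((k^2*y₀^2/4)^n / ((n)!:ℝ)) := by
          rw [hcn]
          simp only
          have hfle : ((n)! : ℝ) ≤ ((n)! : ℝ)^2 := by
            have h1 : (1:ℝ) ≤ ((n)! : ℝ) := by
              exact_mod_cast Nat.one_le_iff_ne_zero.mpr (Nat.factorial_ne_zero n)
            nlinarith
          have e1 : Real.pi * (k^2)^n/(4^n*((n)!:ℝ)^2) * (y₀^2)^n
              = Real.pi * (k^2*y₀^2)^n/(4^n*((n)!:ℝ)^2) := by rw [mul_pow]; ring
          have e2 : Real.pi * ((k^2*y₀^2/4)^n/((n)!:ℝ))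
              = Real.pi * (k^2*y₀^2)^n/(4^n*((n)!:ℝ)) := by rw [div_pow]; ring
          rw [e1, e2]
          apply div_le_div_of_nonneg_left (by positivity) (by positivity)
          exact mul_le_mul_of_nonneg_left hfle (by positivity)
  have hnorm_sum : Summable fun n => ∫ t, ‖G n t‖ ∂μ := by
    apply Summable.of_nonneg_of_le
      (fun n => integral_nonneg fun t => norm_nonneg _) (fun n => ?_)
      (((Real.summable_pow_div_factorial (k^2*y₀^2/4)).mul_left Real.pi).mul_right (2*y₀))
    have hμuniv : (μ Set.univ).toReal = 2*y₀ := by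
      rw [hμ, Measure.restrict_apply_univ, Real.volume_Ioc,
        ENNReal.toReal_ofReal (by linarith)]
      ring
    calc (∫ t, ‖G n t‖ ∂μ) ≤ ∫ _, Real.pi * ((k^2*y₀^2/4)^n / ((n)!:ℝ)) ∂μ := by
          apply integral_mono_of_nonneg
            (Filter.Eventually.of_forall fun t => norm_nonneg _)
            ((integrableOn_const_iff).2 (Or.inr (by
              rw [Real.volume_Ioc]; exact ENNReal.ofReal_lt_top)))
          exact (ae_restrict_iff' measurableSet_Ioc).mpr
            (Filter.Eventually.of_forall (hnorm n))
      _ = Real.pi * ((k^2*y₀^2/4)^n / ((n)!:ℝ)) * (2*y₀) := by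
          rw [MeasureTheory.integral_const, measureReal_def, hμuniv, smul_eq_mul, mul_comm]
  have key := hasSum_integral_of_summable_integral_norm hGint hnorm_sum
  have hval : (∫ t, (∑' n, G n t) ∂μ)
      = ∫ t in (-y₀)..y₀, Complex.exp (Complex.I*ω*t)
        * ((phi (k * Real.sqrt (y₀^2 - t^2)) + phi (-(k * Real.sqrt (y₀^2 - t^2))) : ℝ) : ℂ) := by
    rw [intervalIntegral.integral_of_le hy', ← hμ]
    apply setIntegral_congr_fun measurableSet_Ioc
    intro t ht
    exact (hpt t ht).tsum_eq
  rw [hval] at key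
  have hterm : ∀ n, (∫ t, G n t ∂μ) = ((cn n : ℝ) : ℂ)
      * ∫ t in (-y₀)..y₀, Complex.exp (Complex.I*ω*t) * (((y₀^2 - t^2 : ℝ) : ℂ))^n := by
    intro n
    rw [hG]
    simp only
    rw [MeasureTheory.integral_const_mul, hμ, ← intervalIntegral.integral_of_le hy']
  exact (funext hterm : (fun n => ∫ t, G n t ∂μ) = _) ▸ key
lemma real_core (y₀ k ω : ℝ) (hy₀ : 0 < y₀) :
    ∑' n : ℕ, ∑' p : ℕ, (Real.pi * (k^2)^n / (4^n * ((n)!:ℝ)^2))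
        * ((-1:ℝ)^p * ω^(2*p) / ((2*p)!:ℝ)
          * (∫ t in (-y₀)..y₀, t^(2*p) * (y₀^2 - t^2)^n))
      = 2*Real.pi^2 * ∑' N : ℕ, y₀^(2*N+1) * (k^2-ω^2)^N / (Real.pi * ((2*N+1)!:ℝ)) := by
  set E : ℕ × ℕ → ℝ := fun q => y₀^(2*(q.1+q.2)+1) * (((q.1+q.2).choose q.2 : ℕ) : ℝ)
      * (-(ω^2))^q.2 * (k^2)^q.1 / (Real.pi * ((2*(q.1+q.2)+1)! : ℝ)) with hE
  have hpi : (Real.pi : ℝ) ≠ 0 := Real.pi_ne_zero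
  -- termwise identity
  have hT : ∀ n p : ℕ, (Real.pi * (k^2)^n / (4^n * ((n)!:ℝ)^2))
        * ((-1:ℝ)^p * ω^(2*p) / ((2*p)!:ℝ)
          * (∫ t in (-y₀)..y₀, t^(2*p) * (y₀^2 - t^2)^n))
      = 2*Real.pi^2 * E (n, p) := by
    intro n p
    rw [integral_even_poly, hE]
    simp only
    have hadd : p + n = n + p := Nat.add_comm p n
    rw [hadd]
    have hch : (((n+p).choose p : ℕ) : ℝ) * (((p)! : ℝ) * ((n)! : ℝ)) = ((n+p)! : ℝ) := by
      exact_mod_cast congrArg (Nat.cast : ℕ → ℝ) (by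
        have := Nat.choose_mul_factorial_mul_factorial (Nat.le_add_left p n)
        simpa [Nat.add_sub_cancel, mul_assoc] using this)
    rw [← hch]
    have h1 : ((2*(n+p)+1)! : ℝ) ≠ 0 := by positivity
    have h2 : ((p)! : ℝ) ≠ 0 := by positivity
    have h3 : ((n)! : ℝ) ≠ 0 := by positivity
    have h4 : ((2*p)! : ℝ) ≠ 0 := by positivity
    have h5 : (-(ω^2))^p = (-1:ℝ)^p * ω^(2*p) := by
      rw [neg_pow, pow_mul]
    rw [h5]
    field_simp
  -- summability of E
  have hEbound : ∀ q : ℕ × ℕ, |E q| ≤ (y₀/Real.pi)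
      * ((y₀^2*k^2)^q.1 / ((q.1)! : ℝ) * ((y₀^2*ω^2)^q.2 / ((q.2)! : ℝ))) := by
    rintro ⟨n, p⟩
    rw [hE]
    simp only
    rw [abs_div, abs_mul, abs_mul, abs_mul, abs_pow, abs_pow, abs_pow, abs_neg]
    rw [abs_of_nonneg hy₀.le, abs_of_nonneg (sq_nonneg ω), abs_of_nonneg (sq_nonneg k),
      abs_of_nonneg (Nat.cast_nonneg _),
      abs_of_nonneg (by positivity : (0:ℝ) ≤ Real.pi * ((2*(n+p)+1)! : ℝ))]
    have hsplit : y₀^(2*(n+p)+1) = y₀ * ((y₀^2)^n * (y₀^2)^p) := by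
      rw [← pow_mul, ← pow_mul, ← pow_add, ← pow_succ']
      congr 1
      ring
    calc y₀^(2*(n+p)+1) * (((n+p).choose p : ℕ) : ℝ) * (ω^2)^p * (k^2)^n
          / (Real.pi * ((2*(n+p)+1)! : ℝ))
        = (y₀/Real.pi) * ((y₀^2)^n * (k^2)^n * ((y₀^2)^p * (ω^2)^p))
            * ((((n+p).choose p : ℕ) : ℝ) / ((2*(n+p)+1)! : ℝ)) := by
          rw [hsplit]; field_simp
      _ ≤ (y₀/Real.pi) * ((y₀^2)^n * (k^2)^n * ((y₀^2)^p * (ω^2)^p))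
            * (1 / ((n)! * ((p)! : ℝ))) := by
          apply mul_le_mul_of_nonneg_left (choose_bound n p) (by positivity)
      _ = (y₀/Real.pi) * ((y₀^2*k^2)^n / ((n)! : ℝ) * ((y₀^2*ω^2)^p / ((p)! : ℝ))) := by
          rw [mul_pow, mul_pow]
          have h2 : ((p)! : ℝ) ≠ 0 := by positivity
          have h3 : ((n)! : ℝ) ≠ 0 := by positivity
          field_simp
  have hEsummable : Summable E := by
    rw [← summable_abs_iff]
    apply Summable.of_nonneg_of_le (fun q => abs_nonneg _) hEbound
    exact (((Real.summable_pow_div_factorial (y₀^2*k^2)).mul_of_nonneg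
      (Real.summable_pow_div_factorial (y₀^2*ω^2))
      (fun n => by positivity) (fun p => by positivity)).mul_left (y₀/Real.pi))
  -- rewrite double sum
  have step1 : ∑' n : ℕ, ∑' p : ℕ, (Real.pi * (k^2)^n / (4^n * ((n)!:ℝ)^2))
        * ((-1:ℝ)^p * ω^(2*p) / ((2*p)!:ℝ)
          * (∫ t in (-y₀)..y₀, t^(2*p) * (y₀^2 - t^2)^n))
      = 2*Real.pi^2 * ∑' q : ℕ × ℕ, E q := by
    rw [Summable.tsum_prod' hEsummable (fun n => hEsummable.prod_factor n), ← tsum_mul_left]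
    congr 1
    funext n
    rw [← tsum_mul_left]
    congr 1
    funext p
    exact hT n p
  rw [step1]
  congr 1
  rw [tsum_nat_prod_eq hEsummable]
  congr 1
  funext N
  -- antidiagonal sum
  rw [Finset.Nat.sum_antidiagonal_eq_sum_range_succ (fun n p => E (n, p))]
  have hterm : ∀ i ∈ Finset.range (N+1), E (i, N - i)
      = (k^2)^i * (-(ω^2))^(N-i) * ((N.choose i : ℕ) : ℝ)
          * (y₀^(2*N+1) / (Real.pi * ((2*N+1)!:ℝ))) := by
    intro i hi
    have hiN : i ≤ N := by
      have := Finset.mem_range.mp hi; omega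
    rw [hE]
    simp only
    rw [Nat.add_sub_cancel' hiN, Nat.choose_symm hiN]
    ring
  rw [Finset.sum_congr rfl hterm, ← Finset.sum_mul, ← add_pow]
  rw [show k^2 + -(ω^2) = k^2 - ω^2 by ring]
  ring
lemma S_eval_sin (y₀ r : ℝ) (hr : 0 < r) :
    (∑' N : ℕ, y₀^(2*N+1) * (-(r^2))^N / (Real.pi * ((2*N+1)!:ℝ)))
      = Real.sin (y₀*r) / (Real.pi*r) := by
  have h := (Real.hasSum_sin (y₀*r)).div_const (Real.pi*r)
  have e : (fun n : ℕ => (-1:ℝ)^n * (y₀*r)^(2*n+1)/((2*n+1)!:ℝ) / (Real.pi*r))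
      = fun N => y₀^(2*N+1) * (-(r^2))^N / (Real.pi * ((2*N+1)!:ℝ)) := by
    funext N
    have h2 : (-(r^2) : ℝ)^N = (-1:ℝ)^N * r^(2*N) := by rw [neg_pow, pow_mul]
    rw [h2, mul_pow]
    have h1 : ((2*N+1)! : ℝ) ≠ 0 := by positivity
    have hr' : r ≠ 0 := hr.ne'
    field_simp
    ring
  rw [← e]
  exact h.tsum_eq

lemma S_eval_sinh (y₀ r : ℝ) (hr : 0 < r) :
    (∑' N : ℕ, y₀^(2*N+1) * (r^2)^N / (Real.pi * ((2*N+1)!:ℝ)))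
      = Real.sinh (y₀*r) / (Real.pi*r) := by
  have h := (Real.hasSum_sinh (y₀*r)).div_const (Real.pi*r)
  have e : (fun n : ℕ => (y₀*r)^(2*n+1)/((2*n+1)!:ℝ) / (Real.pi*r))
      = fun N => y₀^(2*N+1) * (r^2)^N / (Real.pi * ((2*N+1)!:ℝ)) := by
    funext N
    have h2 : ((r^2) : ℝ)^N = r^(2*N) := (pow_mul r 2 N).symm
    rw [h2, mul_pow]
    have h1 : ((2*N+1)! : ℝ) ≠ 0 := by positivity
    have hr' : r ≠ 0 := hr.ne'
    field_simp
    ring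
  rw [← e]
  exact h.tsum_eq

lemma S_eval_zero (y₀ : ℝ) :
    (∑' N : ℕ, y₀^(2*N+1) * (0:ℝ)^N / (Real.pi * ((2*N+1)!:ℝ)))
      = y₀ / Real.pi := by
  rw [tsum_eq_single 0 (fun N hN => by rw [zero_pow hN]; ring)]
  norm_num

theorem G_sum (y₀ k ω : ℝ) (hy₀ : 0 < y₀) :
    Gpm y₀ 1 k ω + Gpm y₀ (-1) k ω
      = if k ^ 2 < ω ^ 2 then
          ((Real.sin (y₀ * Real.sqrt (ω ^ 2 - k ^ 2))
            / (Real.pi * Real.sqrt (ω ^ 2 - k ^ 2)) : ℝ) : ℂ)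
        else if ω ^ 2 < k ^ 2 then
          ((Real.sinh (y₀ * Real.sqrt (k ^ 2 - ω ^ 2))
            / (Real.pi * Real.sqrt (k ^ 2 - ω ^ 2)) : ℝ) : ℂ)
        else ((y₀ / Real.pi : ℝ) : ℂ) := by
  have hy' : -y₀ ≤ y₀ := by linarith
  have hinner : ∀ c : ℝ, (∫ s in (0:ℝ)..(Real.pi/2), Complex.exp (((c * Real.sin s : ℝ)) : ℂ))
      = ((phi c : ℝ) : ℂ) := by
    intro c
    rw [phi, ← intervalIntegral.integral_ofReal]
    apply intervalIntegral.integral_congr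
    intro s _
    simp [Complex.ofReal_exp]
  have hGpm : ∀ sgn : ℝ, Gpm y₀ sgn k ω = (1 / (2 * (Real.pi:ℂ)^2))
      * ∫ t in (-y₀)..y₀, Complex.exp (Complex.I*ω*t)
          * ((phi (sgn * k * Real.sqrt (y₀^2 - t^2)) : ℝ) : ℂ) := by
    intro sgn
    rw [Gpm]
    congr 1
    apply intervalIntegral.integral_congr
    intro t _
    simp only
    rw [hinner (sgn * k * Real.sqrt (y₀^2 - t^2))]
  have hcont1 : ∀ sgn : ℝ, Continuous (fun t : ℝ => Complex.exp (Complex.I*ω*t)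
      * ((phi (sgn * k * Real.sqrt (y₀^2 - t^2)) : ℝ) : ℂ)) := by
    intro sgn
    apply Continuous.mul
    · exact Complex.continuous_exp.comp (by fun_prop)
    · exact Complex.continuous_ofReal.comp (phi_cont.comp (by fun_prop))
  have hLHS : Gpm y₀ 1 k ω + Gpm y₀ (-1) k ω
      = (1 / (2 * (Real.pi:ℂ)^2)) * ∫ t in (-y₀)..y₀, Complex.exp (Complex.I*ω*t)
          * ((phi (k * Real.sqrt (y₀^2 - t^2)) + phi (-(k * Real.sqrt (y₀^2 - t^2))) : ℝ) : ℂ) := by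
    rw [hGpm 1, hGpm (-1), ← mul_add,
      ← intervalIntegral.integral_add ((hcont1 1).intervalIntegrable _ _)
        ((hcont1 (-1)).intervalIntegrable _ _)]
    congr 1
    apply intervalIntegral.integral_congr
    intro t _
    simp only
    have e1 : (1:ℝ) * k * Real.sqrt (y₀^2 - t^2) = k * Real.sqrt (y₀^2 - t^2) := by ring
    have e2 : (-1:ℝ) * k * Real.sqrt (y₀^2 - t^2) = -(k * Real.sqrt (y₀^2 - t^2)) := by ring
    rw [e1, e2, Complex.ofReal_add]
    ring
  have hAn : ∀ n : ℕ,
      (∫ t in (-y₀)..y₀, Complex.exp (Complex.I*ω*t) * (((y₀^2 - t^2 : ℝ) : ℂ))^n)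
        = ∑' p : ℕ, ((((-1:ℝ))^p * ω^(2*p) / ((2*p)! : ℝ)
            * (∫ t in (-y₀)..y₀, t^(2*p) * (y₀^2 - t^2)^n) : ℝ) : ℂ) :=
    fun n => ((An_hasSum y₀ k ω hy₀ n).tsum_eq).symm
  have hmain : Gpm y₀ 1 k ω + Gpm y₀ (-1) k ω
      = ((∑' N : ℕ, y₀^(2*N+1) * (k^2-ω^2)^N / (Real.pi * ((2*N+1)!:ℝ)) : ℝ) : ℂ) := by
    rw [hLHS, ← (core_hasSum y₀ k ω hy₀).tsum_eq]
    have hcollapse : (∑' n : ℕ, ((Real.pi * (k^2)^n / (4^n * ((n)!:ℝ)^2) : ℝ) : ℂ)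
          * ∫ t in (-y₀)..y₀, Complex.exp (Complex.I*ω*t) * (((y₀^2 - t^2 : ℝ) : ℂ))^n)
        = ((∑' n : ℕ, ∑' p : ℕ, (Real.pi * (k^2)^n / (4^n * ((n)!:ℝ)^2))
            * ((-1:ℝ)^p * ω^(2*p) / ((2*p)!:ℝ)
              * (∫ t in (-y₀)..y₀, t^(2*p) * (y₀^2 - t^2)^n)) : ℝ) : ℂ) := by
      rw [Complex.ofReal_tsum]
      congr 1
      funext n
      rw [hAn n, Complex.ofReal_tsum, ← tsum_mul_left]
      congr 1
      funext p
      push_cast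
      ring
    rw [hcollapse, real_core y₀ k ω hy₀]
    have hpiC : ((Real.pi:ℂ)) ≠ 0 := by exact_mod_cast Real.pi_ne_zero
    push_cast
    field_simp
  rw [hmain]
  by_cases h1 : k^2 < ω^2
  · rw [if_pos h1]
    have hpos : (0:ℝ) ≤ ω^2 - k^2 := by linarith
    have hr : 0 < Real.sqrt (ω^2 - k^2) := Real.sqrt_pos.mpr (by linarith)
    have hu : k^2 - ω^2 = -((Real.sqrt (ω^2 - k^2))^2) := by
      rw [Real.sq_sqrt hpos]; ring
    rw [hu, S_eval_sin y₀ (Real.sqrt (ω^2 - k^2)) hr]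
  · rw [if_neg h1]
    by_cases h2 : ω^2 < k^2
    · rw [if_pos h2]
      have hpos : (0:ℝ) ≤ k^2 - ω^2 := by linarith
      have hr : 0 < Real.sqrt (k^2 - ω^2) := Real.sqrt_pos.mpr (by linarith)
      have hu : k^2 - ω^2 = (Real.sqrt (k^2 - ω^2))^2 := (Real.sq_sqrt hpos).symm
      rw [hu, S_eval_sinh y₀ (Real.sqrt (k^2 - ω^2)) hr, ← hu]
    · rw [if_neg h2]
      have h3 : k^2 - ω^2 = 0 := by
        have := not_lt.mp h1
        have := not_lt.mp h2
        linarith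
      rw [h3, S_eval_zero y₀]
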